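/- For all λ, μ > 0, t ≥ 0, k ∈ ℤ and real z > 0, the series Σ_{j∈ℤ} z^{2j}·p_{2k+1,2j}(t;λ,μ) converges absolutely and equals e^{−(λ+μ)t}·(z^{2k+1}/h(z))·μ(z²+1)·sinh(t·h(z)/z). -/

import Mathlib

open scoped BigOperators

/-- Inner binomial sum `∑_{k=0}^{n-m} C(n,k) C(n,k+m) ρ^{-2k-m}`. -/
noncomputable def innerSum (ρ : ℝ) (m n : ℕ) : ℝ :=
  ∑ k ∈ Finset.range (n - m + 1),
    (n.choose k : ℝ) * (n.choose (k + m) : ℝ) * ρ ^ (-(2 * (k : ℤ) + (m : ℤ)))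

/-- Series `∑_{n≥m} [x^{2n}/(2n)! + c·x^{2n+1}/(2n+1)!]·innerSum ρ m n`. -/
noncomputable def evenSeries (x c ρ : ℝ) (m : ℕ) : ℝ :=
  ∑' j : ℕ,
    ((x ^ (2 * (m + j)) / (2 * (m + j)).factorial) +
      c * (x ^ (2 * (m + j) + 1) / (2 * (m + j) + 1).factorial)) * innerSum ρ m (m + j)

/-- Series `∑_{n≥m} x^{2n+1}/(2n+1)!·innerSum ρ m n`. -/
noncomputable def oddSeries (x ρ : ℝ) (m : ℕ) : ℝ :=
  ∑' j : ℕ,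
    (x ^ (2 * (m + j) + 1) / (2 * (m + j) + 1).factorial) * innerSum ρ m (m + j)

/-- `p_{2l,2r}(t;λ,μ)`. -/
noncomputable def pEE (lam mu t : ℝ) (l r : ℤ) : ℝ :=
  Real.exp (-(lam + mu) * t) *
    evenSeries (lam * t) ((mu - lam) / lam) (lam / mu) (r - l).natAbs

/-- `p_{2l,2r+1}(t;λ,μ)`. -/
noncomputable def pEO (lam mu t : ℝ) (l r : ℤ) : ℝ :=
  Real.exp (-(lam + mu) * t) *
    (oddSeries (lam * t) (lam / mu) (r - l).natAbs +
      oddSeries (lam * t) (lam / mu) (r - l + 1).natAbs)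

/-- `p_{2l+1,2r}(t;λ,μ)`. -/
noncomputable def pOE (lam mu t : ℝ) (l r : ℤ) : ℝ :=
  Real.exp (-(lam + mu) * t) *
    (oddSeries (mu * t) (mu / lam) (r - l - 1).natAbs +
      oddSeries (mu * t) (mu / lam) (r - l).natAbs)

/-- `p_{2l+1,2r+1}(t;λ,μ)`. -/
noncomputable def pOO (lam mu t : ℝ) (l r : ℤ) : ℝ :=
  Real.exp (-(lam + mu) * t) *
    evenSeries (mu * t) ((lam - mu) / mu) (mu / lam) (r - l).natAbs

/-- Transition probability `p_{k,n}(t;λ,μ)`, by parity of the states. -/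
noncomputable def transP (lam mu t : ℝ) (k n : ℤ) : ℝ :=
  if k % 2 = 0 then
    if n % 2 = 0 then pEE lam mu t (k / 2) (n / 2)
    else pEO lam mu t (k / 2) ((n - 1) / 2)
  else
    if n % 2 = 0 then pOE lam mu t ((k - 1) / 2) (n / 2)
    else pOO lam mu t ((k - 1) / 2) ((n - 1) / 2)

/-- `h(z) = √((μz²+λ)(λz²+μ))`. -/
noncomputable def hFun (lam mu z : ℝ) : ℝ := Real.sqrt ((mu * z ^ 2 + lam) * (lam * z ^ 2 + mu))

lemma innerSum_eq_zero {ρ : ℝ} {m n : ℕ} (h : n < m) : innerSum ρ m n = 0 := by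
  unfold innerSum
  have h1 : n - m + 1 = 1 := by omega
  rw [h1, Finset.sum_range_one, Nat.choose_eq_zero_of_lt (by omega : n < 0 + m)]
  simp

lemma innerSum_nonneg {ρ : ℝ} (hρ : 0 < ρ) (m n : ℕ) : 0 ≤ innerSum ρ m n := by
  unfold innerSum
  refine Finset.sum_nonneg fun k _ => ?_
  have := zpow_pos hρ (-(2 * (k : ℤ) + (m : ℤ)))
  positivity

lemma key_finite {ρ w : ℝ} (hρ : 0 < ρ) (hw : 0 < w) (n : ℕ) :
    ∑ j ∈ Finset.Icc (-(n:ℤ)) (n:ℤ), w ^ j * innerSum ρ j.natAbs n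
      = ((1 + w / ρ) * (1 + 1 / (w * ρ))) ^ n := by
  have hw' : w ≠ 0 := hw.ne'
  have hρ' : ρ ≠ 0 := hρ.ne'
  have expand : ∀ u : ℝ, (1 + u) ^ n = ∑ a ∈ Finset.range (n+1), u ^ a * (n.choose a : ℝ) := by
    intro u; rw [add_comm, add_pow]; simp
  rw [mul_pow, expand, expand, Finset.sum_mul_sum]
  simp only [innerSum, Finset.mul_sum]
  rw [Finset.sum_sigma']
  rw [← Finset.sum_product' (Finset.range (n+1)) (Finset.range (n+1))
    (fun a b => (w/ρ) ^ a * (n.choose a : ℝ) * ((1/(w*ρ)) ^ b * (n.choose b : ℝ)))]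
  refine Finset.sum_nbij' (fun p => (p.2 + p.1.toNat, p.2 + (-p.1).toNat))
    (fun q => ⟨(q.1 : ℤ) - q.2, min q.1 q.2⟩) ?_ ?_ ?_ ?_ ?_
  · rintro ⟨j, kk⟩ hp
    simp only [Finset.mem_sigma, Finset.mem_Icc, Finset.mem_range] at hp
    simp only [Finset.mem_product, Finset.mem_range]
    omega
  · rintro ⟨a, b⟩ hq
    simp only [Finset.mem_product, Finset.mem_range] at hq
    simp only [Finset.mem_sigma, Finset.mem_Icc, Finset.mem_range]
    constructor
    · constructor <;> omega
    · rcases le_total a b with h | h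
      · rw [min_eq_left h]; omega
      · rw [min_eq_right h]; omega
  · rintro ⟨j, kk⟩ hp
    simp only [Finset.mem_sigma, Finset.mem_Icc, Finset.mem_range] at hp
    have e1 : ((kk + j.toNat : ℕ) : ℤ) - ((kk + (-j).toNat : ℕ) : ℤ) = j := by
      push_cast; omega
    have e2 : min (kk + j.toNat) (kk + (-j).toNat) = kk := by
      rcases le_total (kk + j.toNat) (kk + (-j).toNat) with h | h
      · rw [min_eq_left h]; omega
      · rw [min_eq_right h]; omega
    simp only [e1, e2]
  · rintro ⟨a, b⟩ hq
    simp only [Finset.mem_product, Finset.mem_range] at hq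
    simp only [Prod.mk.injEq]
    constructor
    · rcases le_total a b with h | h
      · rw [min_eq_left h]; omega
      · rw [min_eq_right h]; omega
    · rcases le_total a b with h | h
      · rw [min_eq_left h]; omega
      · rw [min_eq_right h]; omega
  · rintro ⟨j, kk⟩ hp
    dsimp only
    simp only [Finset.mem_sigma, Finset.mem_Icc, Finset.mem_range] at hp
    rcases le_or_gt 0 j with hj | hj
    · obtain ⟨m, rfl⟩ : ∃ m : ℕ, j = (m : ℤ) := ⟨j.toNat, by omega⟩
      have ha : ((m : ℤ)).toNat = m := by omega
      have hb : (-(m : ℤ)).toNat = 0 := by omega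
      have hm : ((m : ℤ)).natAbs = m := Int.natAbs_natCast m
      rw [ha, hb, hm, add_zero, zpow_natCast]
      have hz : ρ ^ (-(2 * (kk : ℤ) + (m : ℤ))) = (ρ ^ (2 * kk + m) : ℝ)⁻¹ := by
        rw [show -(2 * (kk : ℤ) + (m : ℤ)) = -((2 * kk + m : ℕ) : ℤ) by push_cast; ring,
          zpow_neg, zpow_natCast]
      rw [hz]
      field_simp
      simp only [div_pow, mul_pow, one_pow, Nat.add_comm m kk]
      field_simp
      ring
    · obtain ⟨m, rfl⟩ : ∃ m : ℕ, j = -(m : ℤ) := ⟨j.natAbs, by omega⟩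
      have ha : (-(m : ℤ)).toNat = 0 := by omega
      have hb : (-(-(m : ℤ))).toNat = m := by omega
      have hm : (-(m : ℤ)).natAbs = m := by omega
      rw [ha, hb, hm, add_zero, zpow_neg, zpow_natCast]
      have hz : ρ ^ (-(2 * (kk : ℤ) + (m : ℤ))) = (ρ ^ (2 * kk + m) : ℝ)⁻¹ := by
        rw [show -(2 * (kk : ℤ) + (m : ℤ)) = -((2 * kk + m : ℕ) : ℤ) by push_cast; ring,
          zpow_neg, zpow_natCast]
      rw [hz]
      field_simp
      simp only [div_pow, mul_pow, one_pow]
      field_simp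
      ring

lemma vanish {ρ w : ℝ} (n : ℕ) (c j : ℤ) (h : j ∉ Finset.Icc (c - n) (c + n)) :
    w ^ j * innerSum ρ (j - c).natAbs n = 0 := by
  rw [innerSum_eq_zero, mul_zero]
  simp only [Finset.mem_Icc, not_and_or, not_le] at h
  omega

lemma summable_key (ρ w : ℝ) (n : ℕ) (c : ℤ) :
    Summable (fun j : ℤ => w ^ j * innerSum ρ (j - c).natAbs n) :=
  summable_of_ne_finset_zero (s := Finset.Icc (c - n) (c + n)) (fun j hj => vanish n c j hj)

lemma key_tsum {ρ w : ℝ} (hρ : 0 < ρ) (hw : 0 < w) (n : ℕ) (c : ℤ) :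
    ∑' j : ℤ, w ^ j * innerSum ρ (j - c).natAbs n
      = w ^ c * ((1 + w / ρ) * (1 + 1 / (w * ρ))) ^ n := by
  rw [← (Equiv.addRight c).tsum_eq (fun j => w ^ j * innerSum ρ (j - c).natAbs n)]
  have h1 : ∀ i : ℤ, w ^ ((Equiv.addRight c) i) * innerSum ρ (((Equiv.addRight c) i) - c).natAbs n
      = w ^ c * (w ^ i * innerSum ρ i.natAbs n) := by
    intro i
    simp only [Equiv.coe_addRight, add_sub_cancel_right]
    rw [zpow_add₀ hw.ne']
    ring
  rw [tsum_congr h1, tsum_mul_left]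
  congr 1
  rw [tsum_eq_sum (s := Finset.Icc (-(n:ℤ)) (n:ℤ)) (fun j hj => by
    rw [innerSum_eq_zero, mul_zero]
    simp only [Finset.mem_Icc, not_and_or, not_le] at hj
    omega)]
  exact key_finite hρ hw n

lemma tsum_sinh_aux {x C : ℝ} (hC : 0 < C) :
    (Summable fun n : ℕ => x ^ (2*n+1) / ((2*n+1).factorial : ℝ) * C ^ n) ∧
    ∑' n : ℕ, x ^ (2*n+1) / ((2*n+1).factorial : ℝ) * C ^ n
      = Real.sinh (x * Real.sqrt C) / Real.sqrt C := by
  have hs : 0 < Real.sqrt C := Real.sqrt_pos.mpr hC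
  have hterm : ∀ n : ℕ, x ^ (2*n+1) / ((2*n+1).factorial : ℝ) * C ^ n
      = (x * Real.sqrt C) ^ (2*n+1) / ((2*n+1).factorial : ℝ) * (Real.sqrt C)⁻¹ := by
    intro n
    have h2 : Real.sqrt C ^ (2*n+1) = C ^ n * Real.sqrt C := by
      rw [pow_succ, pow_mul, Real.sq_sqrt hC.le]
    have hfac : ((2*n+1).factorial : ℝ) ≠ 0 := Nat.cast_ne_zero.mpr (2*n+1).factorial_ne_zero
    rw [mul_pow, h2]
    field_simp
  constructor
  · refine Summable.congr ?_ (fun n => (hterm n).symm)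
    exact ((Real.hasSum_sinh (x * Real.sqrt C)).summable).mul_right _
  · rw [tsum_congr hterm, tsum_mul_right, (Real.hasSum_sinh _).tsum_eq, div_eq_mul_inv]

lemma innerSum_le_one {ρ : ℝ} (hρ : 0 < ρ) (m n : ℕ) :
    innerSum ρ m n ≤ ((1 + 1 / ρ) * (1 + 1 / (1 * ρ))) ^ n := by
  have hC : (0:ℝ) < (1 + 1 / ρ) * (1 + 1 / (1 * ρ)) := by positivity
  rcases le_or_gt (m : ℤ) (n : ℤ) with h | h
  · have hkey := key_finite hρ one_pos (w := 1) n
    have hmem : (m : ℤ) ∈ Finset.Icc (-(n:ℤ)) (n:ℤ) := by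
      simp only [Finset.mem_Icc]; omega
    have := Finset.single_le_sum (f := fun j : ℤ => (1:ℝ) ^ j * innerSum ρ j.natAbs n)
      (fun j _ => by
        have := innerSum_nonneg hρ j.natAbs n
        simp only [one_zpow, one_mul]
        exact this) hmem
    rw [hkey] at this
    simpa using this
  · rw [innerSum_eq_zero (by omega)]
    positivity

lemma summable_odd_f {x ρ : ℝ} (hx : 0 ≤ x) (hρ : 0 < ρ) (m : ℕ) :
    Summable fun n : ℕ => x ^ (2*n+1) / ((2*n+1).factorial : ℝ) * innerSum ρ m n := by
  have hC : (0:ℝ) < (1 + 1 / ρ) * (1 + 1 / (1 * ρ)) := by positivity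
  refine Summable.of_nonneg_of_le (fun n => ?_) (fun n => ?_) (tsum_sinh_aux (x := x) hC).1
  · have h1 := innerSum_nonneg hρ m n
    positivity
  · refine mul_le_mul_of_nonneg_left (innerSum_le_one hρ m n) (by positivity)

lemma oddSeries_eq_tsum {x ρ : ℝ} (hx : 0 ≤ x) (hρ : 0 < ρ) (m : ℕ) :
    oddSeries x ρ m = ∑' n : ℕ, x ^ (2*n+1) / ((2*n+1).factorial : ℝ) * innerSum ρ m n := by
  set f : ℕ → ℝ := fun n => x ^ (2*n+1) / ((2*n+1).factorial : ℝ) * innerSum ρ m n with hf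
  have hsum : Summable f := summable_odd_f hx hρ m
  have h0 : ∀ i ∈ Finset.range m, f i = 0 := by
    intro i hi
    rw [hf]
    simp only
    rw [innerSum_eq_zero (Finset.mem_range.mp hi), mul_zero]
  have hkey := Summable.sum_add_tsum_nat_add m hsum
  rw [Finset.sum_eq_zero h0, zero_add] at hkey
  rw [← hkey, oddSeries]
  refine tsum_congr fun j => ?_
  rw [hf]
  simp only [Nat.add_comm m j]

lemma oddSeries_nonneg {x ρ : ℝ} (hx : 0 ≤ x) (hρ : 0 < ρ) (m : ℕ) :
    0 ≤ oddSeries x ρ m := by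
  rw [oddSeries]
  refine tsum_nonneg fun j => ?_
  have := innerSum_nonneg hρ m (m + j)
  positivity

theorem aux_pOE_gf (lam mu : ℝ) (hlam : 0 < lam) (hmu : 0 < mu)
    (t : ℝ) (ht : 0 ≤ t) (k : ℤ) (z : ℝ) (hz : 0 < z) :
    Summable (fun j : ℤ => |z ^ (2 * j) * pOE lam mu t k j|) ∧
    ∑' j : ℤ, z ^ (2 * j) * pOE lam mu t k j =
      Real.exp (-(lam + mu) * t) * (z ^ (2 * k + 1) / hFun lam mu z) *
        (mu * (z ^ 2 + 1) * Real.sinh (t * hFun lam mu z / z)) := by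
  have hz' : z ≠ 0 := hz.ne'
  set x := mu * t with hxdef
  have hx : 0 ≤ x := mul_nonneg hmu.le ht
  set ρ := mu / lam with hρdef
  have hρ : 0 < ρ := div_pos hmu hlam
  set w := z ^ 2 with hwdef
  have hw : 0 < w := by positivity
  have hwj : ∀ j : ℤ, z ^ (2 * j) = w ^ j := by
    intro j
    have h2 : z ^ (2:ℤ) = w := by
      rw [hwdef, pow_two]
      exact zpow_two z
    rw [zpow_mul, h2]
  set C := (1 + w / ρ) * (1 + 1 / (w * ρ)) with hCdef
  have hC : 0 < C := by positivity
  set s := Real.sqrt C with hsdef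
  have hs : 0 < s := Real.sqrt_pos.mpr hC
  set coeff : ℕ → ℝ := fun n => x ^ (2*n+1) / ((2*n+1).factorial : ℝ) with hcoeffdef
  have hcoeff : ∀ n, 0 ≤ coeff n := fun n => by
    rw [hcoeffdef]; positivity
  set E := Real.exp (-(lam + mu) * t) with hEdef
  have hE : 0 < E := Real.exp_pos _
  set G : ℕ × ℤ → ℝ := fun q =>
    coeff q.1 * (w ^ q.2 * innerSum ρ (q.2 - (k+1)).natAbs q.1 +
      w ^ q.2 * innerSum ρ (q.2 - k).natAbs q.1) with hGdef
  have hGnn : ∀ q, 0 ≤ G q := by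
    intro q
    have h1 := innerSum_nonneg hρ (q.2 - (k+1)).natAbs q.1
    have h2 := innerSum_nonneg hρ (q.2 - k).natAbs q.1
    have h3 := hcoeff q.1
    have h4 : (0:ℝ) < w ^ q.2 := zpow_pos hw _
    rw [hGdef]
    dsimp only
    positivity
  -- per-n summability in j
  have hGrow : ∀ n : ℕ, Summable fun j : ℤ => G (n, j) := by
    intro n
    exact ((summable_key ρ w n (k+1)).add (summable_key ρ w n k)).mul_left (coeff n)
  -- per-n tsum value
  have hGrowval : ∀ n : ℕ, ∑' j : ℤ, G (n, j) = (w ^ (k+1) + w ^ k) * (coeff n * C ^ n) := by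
    intro n
    rw [hGdef]
    dsimp only
    rw [tsum_mul_left, Summable.tsum_add (summable_key ρ w n (k+1)) (summable_key ρ w n k),
      key_tsum hρ hw n (k+1), key_tsum hρ hw n k]
    ring
  have hGcolsum : Summable fun n : ℕ => ∑' j : ℤ, G (n, j) := by
    refine Summable.congr (((tsum_sinh_aux (x := x) hC).1).mul_left (w ^ (k+1) + w ^ k)) ?_
    intro n
    rw [hGrowval n]
  have hGsum : Summable G :=
    (summable_prod_of_nonneg hGnn).mpr ⟨hGrow, hGcolsum⟩
  have hFsum : Summable fun p : ℤ × ℕ => G p.swap := hGsum.prod_symm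
  have hFnn : ∀ p : ℤ × ℕ, 0 ≤ G p.swap := fun p => hGnn _
  obtain ⟨hFrow, hJ⟩ := (summable_prod_of_nonneg hFnn).mp hFsum
  -- the per-j identity
  have hperj : ∀ j : ℤ, z ^ (2 * j) * pOE lam mu t k j = E * ∑' n : ℕ, G (n, j) := by
    intro j
    have hO1 : oddSeries x ρ (j - k - 1).natAbs
        = ∑' n : ℕ, coeff n * innerSum ρ (j - (k+1)).natAbs n := by
      rw [oddSeries_eq_tsum hx hρ, sub_sub]
    have hO2 : oddSeries x ρ (j - k).natAbs
        = ∑' n : ℕ, coeff n * innerSum ρ (j - k).natAbs n := by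
      rw [oddSeries_eq_tsum hx hρ]
    have hsplit : ∑' n : ℕ, G (n, j)
        = w ^ j * ((∑' n : ℕ, coeff n * innerSum ρ (j - (k+1)).natAbs n) +
            (∑' n : ℕ, coeff n * innerSum ρ (j - k).natAbs n)) := by
      rw [← Summable.tsum_add (summable_odd_f hx hρ _) (summable_odd_f hx hρ _), ← tsum_mul_left]
      refine tsum_congr fun n => ?_
      rw [hGdef]
      dsimp only
      ring
    rw [pOE, ← hxdef, ← hρdef, ← hEdef, hsplit, ← hO1, ← hO2, hwj j]
    ring
  constructor
  · refine Summable.congr (hJ.mul_left E) fun j => ?_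
    have h1 : 0 ≤ ∑' n : ℕ, G (n, j) := tsum_nonneg fun n => hGnn _
    show E * (∑' n : ℕ, G (n, j)) = |z ^ (2 * j) * pOE lam mu t k j|
    rw [hperj j, abs_of_nonneg (mul_nonneg hE.le h1)]
  · rw [tsum_congr hperj, tsum_mul_left]
    have hswap : ∑' j : ℤ, ∑' n : ℕ, G (n, j) = (w ^ (k+1) + w ^ k) * (Real.sinh (x * s) / s) := by
      have e1 : ∑' j : ℤ, ∑' n : ℕ, G (n, j) = ∑' p : ℤ × ℕ, G p.swap :=
        (Summable.tsum_prod' hFsum hFrow).symm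
      have e2 : ∑' p : ℤ × ℕ, G p.swap = ∑' q : ℕ × ℤ, G q :=
        (Equiv.prodComm ℤ ℕ).tsum_eq G
      have e3 : ∑' q : ℕ × ℤ, G q = ∑' n : ℕ, ∑' j : ℤ, G (n, j) :=
        Summable.tsum_prod' hGsum hGrow
      rw [e1, e2, e3, tsum_congr hGrowval, tsum_mul_left, (tsum_sinh_aux (x := x) hC).2]
    rw [hswap]
    -- final algebra
    have hP : (0:ℝ) < (mu * z ^ 2 + lam) * (lam * z ^ 2 + mu) := by positivity
    have hh : 0 < hFun lam mu z := Real.sqrt_pos.mpr hP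
    have hsC : s = hFun lam mu z / (mu * z) := by
      have hCP : C = ((mu * z ^ 2 + lam) * (lam * z ^ 2 + mu)) / (mu * z) ^ 2 := by
        rw [hCdef, hwdef, hρdef]
        field_simp
        ring
      rw [hsdef, hCP, Real.sqrt_div hP.le, Real.sqrt_sq (by positivity)]
      rfl
    have hxs : x * s = t * hFun lam mu z / z := by
      rw [hsC, hxdef]
      field_simp
    rw [hxs, hsC]
    have hzk : z ^ (2 * k + 1) = w ^ k * z := by
      rw [zpow_add₀ hz', zpow_one, hwj k]
    have hwk1 : w ^ (k + 1) = w ^ k * w := by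
      rw [zpow_add₀ hw.ne', zpow_one]
    rw [hzk, hwk1]
    have hh' : hFun lam mu z ≠ 0 := hh.ne'
    generalize w ^ k = W
    rw [hwdef]
    field_simp

theorem aux_transP_eq (lam mu t : ℝ) (k j : ℤ) :
    transP lam mu t (2 * k + 1) (2 * j) = pOE lam mu t k j := by
  have h1 : ¬((2 * k + 1) % 2 = 0) := by omega
  have h2 : (2 * j) % 2 = 0 := by omega
  simp only [transP, if_neg h1, if_pos h2]
  have e1 : (2 * k + 1 - 1) / 2 = k := by omega
  have e2 : (2 * j) / 2 = j := by omega
  rw [e1, e2]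

/-- Odd–even generating function: `∑_{j∈ℤ} z^{2j} p_{2k+1,2j}(t)` converges absolutely and
equals `e^{-(λ+μ)t}·(z^{2k+1}/h(z))·μ(z²+1)sinh(t h(z)/z)`. -/
theorem odd_even_generating_function (lam mu : ℝ) (hlam : 0 < lam) (hmu : 0 < mu)
    (t : ℝ) (ht : 0 ≤ t) (k : ℤ) (z : ℝ) (hz : 0 < z) :
    Summable (fun j : ℤ => |z ^ (2 * j) * transP lam mu t (2 * k + 1) (2 * j)|) ∧
    ∑' j : ℤ, z ^ (2 * j) * transP lam mu t (2 * k + 1) (2 * j) =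
      Real.exp (-(lam + mu) * t) * (z ^ (2 * k + 1) / hFun lam mu z) *
        (mu * (z ^ 2 + 1) * Real.sinh (t * hFun lam mu z / z)) := by
  have htr : ∀ j : ℤ, transP lam mu t (2 * k + 1) (2 * j) = pOE lam mu t k j :=
    fun j => aux_transP_eq lam mu t k j
  obtain ⟨H1, H2⟩ := aux_pOE_gf lam mu hlam hmu t ht k z hz
  constructor
  · refine Summable.congr H1 fun j => ?_
    rw [htr j]
  · rw [tsum_congr fun j => by rw [htr j]]
    exact H2
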